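/- If P = (D₁, D₂, D₃, R) is a partition of the vertex set of G and some vertex v satisfies ‖N[v] ∩ R‖ < ‖{i : v ∉ N[Dᵢ]}‖ (i.e., balance_P(v) < 0), then there is no way to assign the vertices of R to the three sets so that the resulting partition of V consists of three dominating sets extending D₁, D₂, D₃. -/
import Mathlib


open Finset

/-- The closed neighborhood of a finite set of vertices. -/
def closedNbhd {V : Type*} [Fintype V] [DecidableEq V] (G : SimpleGraph V)
    [DecidableRel G.Adj] (S : Finset V) : Finset V :=
  S ∪ S.biUnion (fun v => G.neighborFinset v)

theorem negative_balance_no_extension {V : Type*} [Fintype V] [DecidableEq V]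
    (G : SimpleGraph V) [DecidableRel G.Adj]
    (D : Fin 3 → Finset V) (R : Finset V)
    (hdisj : ∀ i j : Fin 3, i ≠ j → Disjoint (D i) (D j))
    (hdisjR : ∀ i : Fin 3, Disjoint (D i) R)
    (hcover : (D 0 ∪ D 1 ∪ D 2) ∪ R = Finset.univ)
    (v : V)
    (hbal : ((insert v (G.neighborFinset v)) ∩ R).card
        < (Finset.univ.filter fun i : Fin 3 => v ∉ closedNbhd G (D i)).card) :
    ¬ ∃ D' : Fin 3 → Finset V,
        (∀ i : Fin 3, D i ⊆ D' i) ∧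
        (∀ i j : Fin 3, i ≠ j → Disjoint (D' i) (D' j)) ∧
        (D' 0 ∪ D' 1 ∪ D' 2 = Finset.univ) ∧
        (∀ i : Fin 3, closedNbhd G (D' i) = Finset.univ) := by
  classical
  rintro ⟨D', hsub, hdisj', hcov', hdom⟩
  have hv : ∀ i : Fin 3, ∃ w, w ∈ D' i ∧ (w = v ∨ G.Adj v w) := by
    intro i
    have hvmem : v ∈ closedNbhd G (D' i) := by rw [hdom i]; exact mem_univ v
    simp only [closedNbhd, mem_union, mem_biUnion, SimpleGraph.mem_neighborFinset] at hvmem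
    rcases hvmem with h | ⟨w, hw, hadj⟩
    · exact ⟨v, h, Or.inl rfl⟩
    · exact ⟨w, hw, Or.inr hadj.symm⟩
  set f : Fin 3 → V := fun i => (hv i).choose with hf
  have hfmem : ∀ i, f i ∈ D' i ∧ (f i = v ∨ G.Adj v (f i)) := fun i => (hv i).choose_spec
  have hmaps : ∀ i ∈ Finset.univ.filter fun i : Fin 3 => v ∉ closedNbhd G (D i),
      f i ∈ (insert v (G.neighborFinset v)) ∩ R := by
    intro i hi
    simp only [mem_filter, mem_univ, true_and] at hi
    obtain ⟨hw, hor⟩ := hfmem i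
    have hR : f i ∈ R := by
      have hmem : f i ∈ (D 0 ∪ D 1 ∪ D 2) ∪ R := by rw [hcover]; exact mem_univ _
      rcases mem_union.mp hmem with h | h
      · exfalso
        have hex : ∃ j : Fin 3, f i ∈ D j := by
          rcases mem_union.mp h with h | h
          · rcases mem_union.mp h with h | h
            · exact ⟨0, h⟩
            · exact ⟨1, h⟩
          · exact ⟨2, h⟩
        obtain ⟨j, hj⟩ := hex
        by_cases hji : j = i
        · rw [hji] at hj
          apply hi
          simp only [closedNbhd, mem_union, mem_biUnion, SimpleGraph.mem_neighborFinset]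
          rcases hor with h' | h'
          · exact Or.inl (h' ▸ hj)
          · exact Or.inr ⟨f i, hj, h'.symm⟩
        · exact Finset.disjoint_left.mp (hdisj' j i hji) (hsub j hj) hw
      · exact h
    simp only [mem_inter, mem_insert, SimpleGraph.mem_neighborFinset]
    exact ⟨hor, hR⟩
  have hinj : Set.InjOn f (Finset.univ.filter fun i : Fin 3 => v ∉ closedNbhd G (D i)) := by
    intro i _ j _ hij
    by_contra hne
    exact Finset.disjoint_left.mp (hdisj' i j hne) (hfmem i).1 (hij ▸ (hfmem j).1)
  exact absurd (Finset.card_le_card_of_injOn f hmaps hinj) hbal.not_ge
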